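/- minProb commutes with Kleisli extension: for f : Mem[U] → C(Mem[U]), S ∈ C(Mem[U]), and A ⊆ Mem[U], one has minProb(f†(S), A) = inf_{μ∈S} ∑_{σ∈supp(μ)∩Mem[U]} μ(σ) · minProb(f(σ), A), where f_⊥(⊥) contributes 0. -/

import Mathlib

/-- A discrete probability distribution on `X ∪ {⊥}` (`⊥` encoded as `none`). -/
def IsDistO {X : Type*} (μ : Option X → ℝ) : Prop :=
  (∀ a, 0 ≤ μ a) ∧ HasSum μ 1

/-- The order on distributions: pointwise `≤` on `X` and reversed on `⊥`. -/
def dLe {X : Type*} (μ ν : Option X → ℝ) : Prop :=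
  (∀ x : X, μ (some x) ≤ ν (some x)) ∧ ν none ≤ μ none

/-- `S` is an element of the convex powerset `C(X)`: a nonempty, up-closed, convex,
Cauchy-closed (topologically closed in the product topology) set of distributions
over `X ∪ {⊥}`. -/
def IsCSet {X : Type*} (S : Set (Option X → ℝ)) : Prop :=
  S.Nonempty ∧ (∀ μ ∈ S, IsDistO μ) ∧
  (∀ μ ∈ S, ∀ ν ∈ S, ∀ p : ℝ, 0 ≤ p → p ≤ 1 →
    (fun a => p * μ a + (1 - p) * ν a) ∈ S) ∧
  (∀ μ ∈ S, ∀ ν, IsDistO ν → dLe μ ν → ν ∈ S) ∧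
  IsClosed S

/-- The probability a distribution assigns to an event `A ⊆ X`. -/
noncomputable def probOf {X : Type*} (μ : Option X → ℝ) (A : Set X) : ℝ :=
  ∑' x : A, μ (some ↑x)

/-- The minimum probability of the event `A` over the set of distributions `S`. -/
noncomputable def minProb {X : Type*} (S : Set (Option X → ℝ)) (A : Set X) : ℝ :=
  sInf ((fun μ => probOf μ A) '' S)

/-- Kleisli extension of `f` for the convex powerset monad: mix, for each state in
the support of some `μ ∈ S`, a continuation distribution drawn from `f`; at `⊥`
the continuation may be any distribution (the bottom element `⊥_C`). -/
def kleisli {X : Type*} (f : X → Set (Option X → ℝ)) (S : Set (Option X → ℝ)) :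
    Set (Option X → ℝ) :=
  {g | ∃ μ ∈ S, ∃ ν : Option X → (Option X → ℝ),
        (∀ a, IsDistO (ν a)) ∧
        (∀ x : X, μ (some x) ≠ 0 → ν (some x) ∈ f x) ∧
        g = fun b => ∑' a : Option X, μ a * ν a b}

/-- Binary convex (nondeterministic) union `S ⋓ T`. -/
def cUnion2 {X : Type*} (S T : Set (Option X → ℝ)) : Set (Option X → ℝ) :=
  {g | ∃ μ ∈ S, ∃ ν ∈ T, ∃ p : ℝ, 0 ≤ p ∧ p ≤ 1 ∧
        g = fun a => p * μ a + (1 - p) * ν a}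

/-- Finite convex (nondeterministic) union `⋓_{i∈s} S_i`: all convex combinations
of choices from the `S_i`. -/
def cUnionF {I X : Type*} (s : Finset I) (S : I → Set (Option X → ℝ)) :
    Set (Option X → ℝ) :=
  {g | ∃ w : I → ℝ, (∀ i, 0 ≤ w i) ∧ (∑ i ∈ s, w i) = 1 ∧
        ∃ μ : I → (Option X → ℝ), (∀ i ∈ s, μ i ∈ S i) ∧
          g = fun a => ∑ i ∈ s, w i * μ i a}

open Function

section Aux
variable {X : Type*}

private lemma real_le_of_forall_pos_le_add {a b : ℝ} (h : ∀ ε : ℝ, 0 < ε → a ≤ b + ε) :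
    a ≤ b := by
  by_contra hc
  push_neg at hc
  have := h ((a - b) / 2) (by linarith)
  linarith

private lemma summable_mul_le {ι : Type*} {μ : ι → ℝ} (hμs : Summable μ)
    (hμ0 : ∀ i, 0 ≤ μ i) {c : ι → ℝ} (h0 : ∀ i, 0 ≤ c i) (h1 : ∀ i, c i ≤ 1) :
    Summable fun i => μ i * c i :=
  Summable.of_nonneg_of_le (fun i => mul_nonneg (hμ0 i) (h0 i))
    (fun i => (mul_le_mul_of_nonneg_left (h1 i) (hμ0 i)).trans_eq (mul_one _)) hμs

private lemma inj_someA (A : Set X) : Injective (fun x : A => (some (x : X) : Option X)) :=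
  fun a b hab => Subtype.ext (Option.some_injective X hab)

private lemma summable_someA {μ : Option X → ℝ} (h : Summable μ) (A : Set X) :
    Summable (fun x : A => μ (some (x : X))) :=
  (h.comp_injective (Option.some_injective X)).subtype A

private lemma probOf_nonneg' {μ : Option X → ℝ} (h : ∀ a, 0 ≤ μ a) (A : Set X) :
    0 ≤ probOf μ A := tsum_nonneg fun _ => h _

private lemma probOf_le_one' {μ : Option X → ℝ} (h : IsDistO μ) (A : Set X) :
    probOf μ A ≤ 1 := by
  have h2 := tsum_comp_le_tsum_of_inj h.2.summable h.1 (inj_someA A)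
  rw [h.2.tsum_eq] at h2
  exact h2

private lemma minProb_nonneg' {S : Set (Option X → ℝ)} (hS : ∀ μ ∈ S, IsDistO μ) (A : Set X) :
    0 ≤ minProb S A :=
  Real.sInf_nonneg (by rintro x ⟨μ, hμ, rfl⟩; exact probOf_nonneg' (hS μ hμ).1 A)

private lemma minProb_le' {S : Set (Option X → ℝ)} (hS : ∀ μ ∈ S, IsDistO μ)
    {ν : Option X → ℝ} (hν : ν ∈ S) (A : Set X) : minProb S A ≤ probOf ν A :=
  csInf_le ⟨0, by rintro x ⟨μ, hμ, rfl⟩; exact probOf_nonneg' (hS μ hμ).1 A⟩ ⟨ν, hν, rfl⟩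

private lemma minProb_le_one' {S : Set (Option X → ℝ)} (hne : S.Nonempty)
    (hS : ∀ μ ∈ S, IsDistO μ) (A : Set X) : minProb S A ≤ 1 := by
  obtain ⟨ν, hν⟩ := hne
  exact (minProb_le' hS hν A).trans (probOf_le_one' (hS ν hν) A)

private lemma tsum_option_split (h : Option X → ℝ) (hs : Summable h) :
    ∑' a : Option X, h a = h none + ∑' x : X, h (some x) := by
  classical
  rw [Summable.tsum_eq_add_tsum_ite hs none]
  congr 1
  have key := Function.Injective.tsum_eq (Option.some_injective X)
    (f := fun a : Option X => if a = none then 0 else h a) (by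
      intro a ha
      cases a with
      | none => simp at ha
      | some x => exact ⟨x, rfl⟩)
  calc ∑' a : Option X, (if a = none then 0 else h a)
      = ∑' x : X, (if (some x : Option X) = none then 0 else h (some x)) := key.symm
    _ = ∑' x : X, h (some x) := tsum_congr fun x => by simp

private lemma probOf_mix {μ : Option X → ℝ} (hμ : IsDistO μ)
    {ν : Option X → Option X → ℝ} (hν : ∀ a, IsDistO (ν a)) (A : Set X) :
    probOf (fun b => ∑' a : Option X, μ a * ν a b) A
      = ∑' a : Option X, μ a * probOf (ν a) A := by
  have hsum_inner : ∀ a : Option X, Summable (fun x : A => μ a * ν a (some (x : X))) :=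
    fun a => (summable_someA (hν a).2.summable A).mul_left (μ a)
  have houter_eq : ∀ a, (∑' x : A, μ a * ν a (some (x : X))) = μ a * probOf (ν a) A :=
    fun a => by rw [tsum_mul_left]; rfl
  have hsum_outer : Summable (fun a : Option X => ∑' x : A, μ a * ν a (some (x : X))) := by
    have := summable_mul_le hμ.2.summable hμ.1
      (c := fun a => probOf (ν a) A)
      (fun a => probOf_nonneg' (hν a).1 A) (fun a => probOf_le_one' (hν a) A)
    refine this.congr fun a => (houter_eq a).symm
  have hunc : Summable (Function.uncurry fun (a : Option X) (x : A) =>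
      μ a * ν a (some (x : X))) := by
    refine (summable_prod_of_nonneg ?_).2 ⟨hsum_inner, hsum_outer⟩
    intro p
    exact mul_nonneg (hμ.1 _) ((hν _).1 _)
  have hswap := Summable.tsum_comm (f := fun (a : Option X) (x : A) => μ a * ν a (some (x : X))) hunc
  calc probOf (fun b => ∑' a : Option X, μ a * ν a b) A
      = ∑' (x : A) (a : Option X), μ a * ν a (some (x : X)) := rfl
    _ = ∑' (a : Option X) (x : A), μ a * ν a (some (x : X)) := hswap
    _ = ∑' a : Option X, μ a * probOf (ν a) A := tsum_congr houter_eq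

private lemma deltaNone_isDistO : IsDistO (fun b : Option X => b.elim 1 fun _ => 0) := by
  refine ⟨fun a => ?_, ?_⟩
  · cases a <;> simp
  · have h := hasSum_single (f := fun b : Option X => b.elim 1 fun _ => (0 : ℝ)) none ?_
    · simpa using h
    · intro b hb
      cases b with
      | none => exact absurd rfl hb
      | some x => simp

private lemma probOf_deltaNone (A : Set X) :
    probOf (fun b : Option X => b.elim 1 fun _ => 0) A = 0 := by
  simp [probOf]

end Aux

/-- `minProb` commutes with Kleisli extension:
`minProb (f†(S), A) = inf_{μ∈S} ∑_{σ} μ(σ) · minProb (f σ) A`, where the sum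
ranges over proper states (the `⊥` branch contributes `0`). -/
theorem stmt_13 {X : Type*} [Countable X]
    (f : X → Set (Option X → ℝ)) (hf : ∀ x, IsCSet (f x))
    (S : Set (Option X → ℝ)) (hS : IsCSet S) (A : Set X) :
    minProb (kleisli f S) A
      = sInf ((fun μ => ∑' x : X, μ (some x) * minProb (f x) A) '' S) := by
  obtain ⟨hSne, hSd, -, -, -⟩ := hS
  have hfne : ∀ x, (f x).Nonempty := fun x => (hf x).1
  have hfd : ∀ x, ∀ ν ∈ f x, IsDistO ν := fun x => (hf x).2.1
  have hm0 : ∀ x, 0 ≤ minProb (f x) A := fun x => minProb_nonneg' (hfd x) A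
  have hm1 : ∀ x, minProb (f x) A ≤ 1 := fun x => minProb_le_one' (hfne x) (hfd x) A
  have hsummx : ∀ μ ∈ S, Summable (fun x : X => μ (some x)) := fun μ hμ =>
    (hSd μ hμ).2.summable.comp_injective (Option.some_injective X)
  have hsumF : ∀ μ ∈ S, Summable (fun x : X => μ (some x) * minProb (f x) A) := fun μ hμ =>
    summable_mul_le (hsummx μ hμ) (fun x => (hSd μ hμ).1 _) hm0 hm1
  have hF0 : ∀ μ ∈ S, 0 ≤ ∑' x : X, μ (some x) * minProb (f x) A := fun μ hμ =>
    tsum_nonneg fun x => mul_nonneg ((hSd μ hμ).1 _) (hm0 x)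
  have hbddR : BddBelow ((fun μ => ∑' x : X, μ (some x) * minProb (f x) A) '' S) :=
    ⟨0, by rintro b ⟨μ, hμ, rfl⟩; exact hF0 μ hμ⟩
  have hRne : ((fun μ => ∑' x : X, μ (some x) * minProb (f x) A) '' S).Nonempty :=
    hSne.image _
  have hKd : ∀ g ∈ kleisli f S, ∀ b, 0 ≤ g b := by
    rintro g ⟨μ, hμ, ν, hνd, hνf, rfl⟩ b
    exact tsum_nonneg fun a => mul_nonneg ((hSd μ hμ).1 a) ((hνd a).1 b)
  have hbddL : BddBelow ((fun μ => probOf μ A) '' (kleisli f S)) :=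
    ⟨0, by rintro b ⟨g, hg, rfl⟩; exact probOf_nonneg' (hKd g hg) A⟩
  obtain ⟨μ0, hμ0⟩ := hSne
  have hKne : (kleisli f S).Nonempty := by
    refine ⟨_, μ0, hμ0, fun a => a.elim (fun b : Option X => b.elim 1 fun _ => 0)
      (fun x => (hfne x).some), ?_, ?_, rfl⟩
    · intro a
      cases a with
      | none => exact deltaNone_isDistO
      | some x => exact hfd x _ (hfne x).some_mem
    · intro x _
      exact (hfne x).some_mem
  have h2 : sInf ((fun μ => ∑' x : X, μ (some x) * minProb (f x) A) '' S)
      ≤ minProb (kleisli f S) A := by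
    refine le_csInf (hKne.image _) ?_
    rintro b ⟨g, ⟨μ, hμ, ν, hνd, hνf, rfl⟩, rfl⟩
    have hμd := hSd μ hμ
    have hc0 : ∀ a, 0 ≤ probOf (ν a) A := fun a => probOf_nonneg' (hνd a).1 A
    have hc1 : ∀ a, probOf (ν a) A ≤ 1 := fun a => probOf_le_one' (hνd a) A
    have hsum1 : Summable fun a : Option X => μ a * probOf (ν a) A :=
      summable_mul_le hμd.2.summable hμd.1 hc0 hc1
    have e1 : probOf (fun b => ∑' a : Option X, μ a * ν a b) A
        = μ none * probOf (ν none) A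
          + ∑' x : X, μ (some x) * probOf (ν (some x)) A := by
      rw [probOf_mix hμd hνd A, tsum_option_split _ hsum1]
    have hsum2 : Summable fun x : X => μ (some x) * probOf (ν (some x)) A :=
      summable_mul_le (hsummx μ hμ) (fun x => hμd.1 _) (fun x => hc0 _) (fun x => hc1 _)
    have hterm : ∀ x : X,
        μ (some x) * minProb (f x) A ≤ μ (some x) * probOf (ν (some x)) A := by
      intro x
      by_cases hx : μ (some x) = 0
      · simp [hx]
      · exact mul_le_mul_of_nonneg_left (minProb_le' (hfd x) (hνf x hx) A) (hμd.1 _)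
    calc sInf ((fun μ => ∑' x : X, μ (some x) * minProb (f x) A) '' S)
        ≤ ∑' x : X, μ (some x) * minProb (f x) A := csInf_le hbddR ⟨μ, hμ, rfl⟩
      _ ≤ ∑' x : X, μ (some x) * probOf (ν (some x)) A :=
          Summable.tsum_le_tsum hterm (hsumF μ hμ) hsum2
      _ ≤ μ none * probOf (ν none) A
          + ∑' x : X, μ (some x) * probOf (ν (some x)) A :=
          le_add_of_nonneg_left (mul_nonneg (hμd.1 _) (hc0 _))
      _ = probOf (fun b => ∑' a : Option X, μ a * ν a b) A := e1.symm
  have h1 : minProb (kleisli f S) A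
      ≤ sInf ((fun μ => ∑' x : X, μ (some x) * minProb (f x) A) '' S) := by
    refine le_csInf hRne ?_
    rintro b ⟨μ, hμ, rfl⟩
    have hμd := hSd μ hμ
    refine real_le_of_forall_pos_le_add fun ε hε => ?_
    have hch : ∀ x : X, ∃ ν ∈ f x, probOf ν A < minProb (f x) A + ε := by
      intro x
      obtain ⟨c, ⟨ν, hν, rfl⟩, hc⟩ := exists_lt_of_csInf_lt ((hfne x).image _)
        (lt_add_of_pos_right (minProb (f x) A) hε)
      exact ⟨ν, hν, hc⟩
    choose νs hmem hlt using hch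
    set ν : Option X → Option X → ℝ :=
      fun a => a.elim (fun b : Option X => b.elim 1 fun _ => 0) νs with hνdef
    have hνd : ∀ a, IsDistO (ν a) := by
      intro a
      cases a with
      | none => exact deltaNone_isDistO
      | some x => exact hfd x _ (hmem x)
    have hg : (fun b => ∑' a : Option X, μ a * ν a b) ∈ kleisli f S :=
      ⟨μ, hμ, ν, hνd, fun x _ => hmem x, rfl⟩
    have hc0 : ∀ a, 0 ≤ probOf (ν a) A := fun a => probOf_nonneg' (hνd a).1 A
    have hc1 : ∀ a, probOf (ν a) A ≤ 1 := fun a => probOf_le_one' (hνd a) A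
    have hsum1 : Summable fun a : Option X => μ a * probOf (ν a) A :=
      summable_mul_le hμd.2.summable hμd.1 hc0 hc1
    have e1 : probOf (fun b => ∑' a : Option X, μ a * ν a b) A
        = μ none * probOf (ν none) A
          + ∑' x : X, μ (some x) * probOf (ν (some x)) A := by
      rw [probOf_mix hμd hνd A, tsum_option_split _ hsum1]
    have e2 : probOf (ν none) A = 0 := probOf_deltaNone A
    have hsum2 : Summable fun x : X => μ (some x) * probOf (ν (some x)) A :=
      summable_mul_le (hsummx μ hμ) (fun x => hμd.1 _)
        (fun x => hc0 (some x)) (fun x => hc1 (some x))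
    have hsum3 : Summable fun x : X => μ (some x) * (minProb (f x) A + ε) := by
      refine ((hsumF μ hμ).add ((hsummx μ hμ).mul_right ε)).congr fun x => ?_
      ring
    have hle : ∑' x : X, μ (some x) * probOf (ν (some x)) A
        ≤ ∑' x : X, μ (some x) * (minProb (f x) A + ε) :=
      Summable.tsum_le_tsum (fun x => mul_le_mul_of_nonneg_left (hlt x).le (hμd.1 _)) hsum2 hsum3
    have hsome_le_one : ∑' x : X, μ (some x) ≤ 1 := by
      have h3 := tsum_comp_le_tsum_of_inj hμd.2.summable hμd.1 (Option.some_injective X)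
      rwa [hμd.2.tsum_eq] at h3
    have esplit : ∑' x : X, μ (some x) * (minProb (f x) A + ε)
        = (∑' x : X, μ (some x) * minProb (f x) A) + (∑' x : X, μ (some x)) * ε := by
      rw [← tsum_mul_right, ← Summable.tsum_add (hsumF μ hμ) ((hsummx μ hμ).mul_right ε)]
      exact tsum_congr fun x => by ring
    calc minProb (kleisli f S) A
        ≤ probOf (fun b => ∑' a : Option X, μ a * ν a b) A := csInf_le hbddL ⟨_, hg, rfl⟩
      _ = ∑' x : X, μ (some x) * probOf (ν (some x)) A := by rw [e1, e2]; ring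
      _ ≤ ∑' x : X, μ (some x) * (minProb (f x) A + ε) := hle
      _ = (∑' x : X, μ (some x) * minProb (f x) A) + (∑' x : X, μ (some x)) * ε := esplit
      _ ≤ (∑' x : X, μ (some x) * minProb (f x) A) + ε := by
          have h4 : (∑' x : X, μ (some x)) * ε ≤ 1 * ε :=
            mul_le_mul_of_nonneg_right hsome_le_one hε.le
          linarith
  exact le_antisymm h1 h2
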